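/- For any density matrix ρ and any orthogonal projector P (of the same size), ‖ρ P‖₁ ≤ √(tr(ρ P)). -/

import Mathlib

open Matrix
open scoped ComplexOrder
open scoped MatrixOrder

namespace TraceNormAux

variable {n : Type*} [Fintype n] [DecidableEq n]

lemma re_diag_nonneg {M : Matrix n n ℂ} (hM : M.PosSemidef) (i : n) :
    0 ≤ (M i i).re := by
  have h := hM.re_dotProduct_nonneg (Pi.single i 1)
  simpa [dotProduct, mulVec, Pi.single_apply, Finset.sum_ite_eq] using h

lemma trace_re_nonneg {M : Matrix n n ℂ} (hM : M.PosSemidef) : 0 ≤ M.trace.re := by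
  rw [Matrix.trace, Complex.re_sum]
  exact Finset.sum_nonneg fun i _ => re_diag_nonneg hM i

lemma trace_mul_re_nonneg {M N : Matrix n n ℂ} (hM : M.PosSemidef) (hN : N.PosSemidef) :
    0 ≤ (M * N).trace.re := by
  have h1 : M * N = M * CFC.sqrt N * CFC.sqrt N := by rw [mul_assoc, CFC.sqrt_mul_sqrt_self N hN.nonneg]
  have h2 : (M * CFC.sqrt N * CFC.sqrt N).trace = (CFC.sqrt N * M * CFC.sqrt N).trace := by
    rw [trace_mul_comm, ← mul_assoc]
  have h3 : (CFC.sqrt N * M * CFC.sqrt N).PosSemidef := by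
    have := hM.mul_mul_conjTranspose_same (CFC.sqrt N)
    rwa [(CFC.sqrt_nonneg N).posSemidef.1] at this
  rw [h1, h2]
  exact trace_re_nonneg h3

set_option linter.unusedSectionVars false in
lemma key_trace (Z W : Matrix n n ℂ) :
    (Zᴴ * W).trace.re = ∑ i, ∑ j, ((starRingEnd ℂ) (Z j i) * W j i).re := by
  rw [Matrix.trace, Complex.re_sum]
  congr 1; ext i
  simp [Matrix.mul_apply, Complex.re_sum, conjTranspose_apply]

lemma key_trace_self (Z : Matrix n n ℂ) :
    (Zᴴ * Z).trace.re = ∑ i, ∑ j, ‖Z j i‖ ^ 2 := by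
  rw [key_trace]
  refine Finset.sum_congr rfl fun i _ => Finset.sum_congr rfl fun j _ => ?_
  rw [mul_comm, Complex.mul_conj, Complex.sq_norm]
  simp

/-- Cauchy–Schwarz for the Frobenius inner product. -/
lemma re_trace_conjTranspose_mul_le (Y X : Matrix n n ℂ) :
    (Yᴴ * X).trace.re ≤ Real.sqrt ((Yᴴ * Y).trace.re) * Real.sqrt ((Xᴴ * X).trace.re) := by
  rw [key_trace, key_trace_self, key_trace_self]
  calc ∑ i, ∑ j, ((starRingEnd ℂ) (Y j i) * X j i).re
      ≤ ∑ i, ∑ j, ‖Y j i‖ * ‖X j i‖ := by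
        refine Finset.sum_le_sum fun i _ => Finset.sum_le_sum fun j _ => ?_
        calc ((starRingEnd ℂ) (Y j i) * X j i).re
            ≤ ‖(starRingEnd ℂ) (Y j i) * X j i‖ := Complex.re_le_norm _
          _ = ‖Y j i‖ * ‖X j i‖ := by
              rw [norm_mul, Complex.norm_conj]
    _ ≤ Real.sqrt (∑ i, ∑ j, ‖Y j i‖ ^ 2) *
        Real.sqrt (∑ i, ∑ j, ‖X j i‖ ^ 2) := by
        rw [← Finset.sum_product', ← Finset.sum_product', ← Finset.sum_product']
        set s := (Finset.univ : Finset (n × n))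
        have h := Finset.sum_mul_sq_le_sq_mul_sq s (fun p => ‖Y p.2 p.1‖)
          (fun p => ‖X p.2 p.1‖)
        have h1 : 0 ≤ ∑ p ∈ s, ‖Y p.2 p.1‖ * ‖X p.2 p.1‖ :=
          Finset.sum_nonneg fun p _ => mul_nonneg (norm_nonneg _) (norm_nonneg _)
        calc ∑ p ∈ s, ‖Y p.2 p.1‖ * ‖X p.2 p.1‖
            = Real.sqrt ((∑ p ∈ s, ‖Y p.2 p.1‖ * ‖X p.2 p.1‖) ^ 2) := by
              rw [Real.sqrt_sq h1]
          _ ≤ Real.sqrt ((∑ p ∈ s, ‖Y p.2 p.1‖ ^ 2) *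
              (∑ p ∈ s, ‖X p.2 p.1‖ ^ 2)) := Real.sqrt_le_sqrt h
          _ = _ := Real.sqrt_mul (Finset.sum_nonneg fun p _ => sq_nonneg _) _

end TraceNormAux

/-- The trace norm (Schatten 1-norm) of a complex square matrix: `‖A‖₁ = tr √(AᴴA)`. -/
noncomputable def traceNorm {m : Type*} [Fintype m] [DecidableEq m] (A : Matrix m m ℂ) : ℝ :=
  ((Matrix.posSemidef_conjTranspose_mul_self A).1.eigenvectorUnitary.1 *
    Matrix.diagonal (((↑) : ℝ → ℂ) ∘ (√·) ∘ (Matrix.posSemidef_conjTranspose_mul_self A).1.eigenvalues) *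
    (star (Matrix.posSemidef_conjTranspose_mul_self A).1.eigenvectorUnitary : Matrix m m ℂ)).trace.re

/-- For any density matrix `ρ` and orthogonal projector `P`, `‖ρ P‖₁ ≤ √(tr(ρ P))`. -/
theorem traceNorm_densityMatrix_mul_proj_le {d : ℕ} (ρ P : Matrix (Fin d) (Fin d) ℂ)
    (hρ : ρ.PosSemidef) (hρtr : ρ.trace = 1)
    (hP_herm : Pᴴ = P) (hP_idem : P * P = P) :
    traceNorm (ρ * P) ≤ Real.sqrt ((ρ * P).trace.re) := by
  classical
  open TraceNormAux in
  set A : Matrix (Fin d) (Fin d) ℂ := ρ * P with hAdef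
  have hH : (Aᴴ * A).PosSemidef := posSemidef_conjTranspose_mul_self A
  set lam : Fin d → ℝ := hH.1.eigenvalues with hlamdef
  have hlam : ∀ i, 0 ≤ lam i := hH.eigenvalues_nonneg
  set V : Matrix (Fin d) (Fin d) ℂ := (hH.1.eigenvectorUnitary : Matrix (Fin d) (Fin d) ℂ)
    with hVdef
  have hVsV : star V * V = 1 := mem_unitaryGroup_iff'.mp hH.1.eigenvectorUnitary.2
  have hVVs : V * star V = 1 := mem_unitaryGroup_iff.mp hH.1.eigenvectorUnitary.2
  set c : Fin d → ℝ := fun i => Real.sqrt (lam i) with hcdef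
  -- Step 1 : traceNorm A = ∑ i, c i
  have e1 : (posSemidef_conjTranspose_mul_self A).1.eigenvectorUnitary.1 *
      diagonal (((↑) : ℝ → ℂ) ∘ (√·) ∘ (posSemidef_conjTranspose_mul_self A).1.eigenvalues) *
      (star (posSemidef_conjTranspose_mul_self A).1.eigenvectorUnitary : Matrix (Fin d) (Fin d) ℂ)
      = V * diagonal (fun i => (c i : ℂ)) * star V := rfl
  have step1 : traceNorm A = ∑ i, c i := by
    rw [traceNorm, e1, trace_mul_cycle, hVsV, one_mul, trace_diagonal, Complex.re_sum]
    simp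
  -- Setup
  set B : Matrix (Fin d) (Fin d) ℂ := CFC.sqrt ρ with hBdef
  have hBh : Bᴴ = B := (CFC.sqrt_nonneg ρ).posSemidef.1
  have hBB : B * B = ρ := CFC.sqrt_mul_sqrt_self ρ hρ.nonneg
  set W : Matrix (Fin d) (Fin d) ℂ := A * V with hWdef
  set X : Matrix (Fin d) (Fin d) ℂ := B * P * V with hXdef
  have hWX : W = B * X := by
    rw [hWdef, hXdef, hAdef, ← hBB]
    simp only [mul_assoc]
  have hWW : Wᴴ * W = diagonal (fun i => (lam i : ℂ)) := by
    have hsp := (Unitary.conjStarAlgAut_star_apply (S := ℂ) _ _).symm.trans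
      hH.1.conjStarAlgAut_star_eigenvectorUnitary
    have e : Wᴴ * W = star V * (Aᴴ * A) * V := by
      simp only [hWdef, conjTranspose_mul, Matrix.star_eq_conjTranspose, mul_assoc]
    rw [e, hsp]
    rfl
  set f : Fin d → ℂ := fun i => if lam i = 0 then 0 else (((c i)⁻¹ : ℝ) : ℂ) with hfdef
  have hfstar : ∀ i, star (f i) = f i := by
    intro i
    simp only [hfdef]
    split <;> simp
  have hsf : star f = f := funext fun i => (Pi.star_apply f i).trans (hfstar i)
  set U : Matrix (Fin d) (Fin d) ℂ := W * diagonal f with hUdef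
  set Y : Matrix (Fin d) (Fin d) ℂ := B * U with hYdef
  have hUW : Uᴴ * W = diagonal (fun i => f i * (lam i : ℂ)) := by
    rw [hUdef, conjTranspose_mul, diagonal_conjTranspose, hsf, mul_assoc, hWW,
      diagonal_mul_diagonal]
  -- the key equality
  have hcne : ∀ i, lam i ≠ 0 → (c i : ℝ) ≠ 0 := by
    intro i h
    rw [hcdef]
    exact Real.sqrt_ne_zero'.mpr (lt_of_le_of_ne (hlam i) (Ne.symm h))
  have hcsq : ∀ i, c i * c i = lam i := fun i => Real.mul_self_sqrt (hlam i)
  have keyeq : (Yᴴ * X).trace.re = ∑ i, c i := by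
    have h1 : Yᴴ * X = Uᴴ * W := by
      rw [hYdef, conjTranspose_mul, hBh, mul_assoc, ← hWX]
    rw [h1, hUW, trace_diagonal, Complex.re_sum]
    refine Finset.sum_congr rfl fun i _ => ?_
    by_cases h : lam i = 0
    · simp [hfdef, h, hcdef, Real.sqrt_eq_zero', le_of_eq h.symm]
    · have : f i * (lam i : ℂ) = ((c i : ℝ) : ℂ) := by
        rw [hfdef]
        simp only [h, if_false]
        rw [← hcsq i]
        push_cast
        field_simp
      rw [this, Complex.ofReal_re]
  -- trace of XᴴX
  have hXX : (Xᴴ * X).trace = A.trace := by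
    have e : Xᴴ * X = star V * (P * (B * (B * (P * V)))) := by
      simp only [hXdef, conjTranspose_mul, hBh, hP_herm, Matrix.star_eq_conjTranspose,
        mul_assoc]
    calc (Xᴴ * X).trace = ((P * (B * (B * P))) * (V * star V)).trace := by
          rw [e, trace_mul_comm]
          simp only [mul_assoc]
      _ = (P * (B * (B * P))).trace := by rw [hVVs, mul_one]
      _ = (ρ * (P * P)).trace := by
          rw [trace_mul_comm, ← mul_assoc, ← mul_assoc, hBB, mul_assoc]
      _ = A.trace := by rw [hP_idem, hAdef]
  -- trace of YᴴY is at most 1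
  have hUU : Uᴴ * U = diagonal (fun i => if lam i = 0 then 0 else 1) := by
    rw [hUdef, conjTranspose_mul, diagonal_conjTranspose, hsf, mul_assoc, ← mul_assoc Wᴴ, hWW,
      diagonal_mul_diagonal, diagonal_mul_diagonal]
    refine congrArg diagonal (funext fun i => ?_)
    by_cases h : lam i = 0
    · simp [hfdef, h]
    · simp only [hfdef, h, if_false]
      rw [← hcsq i]
      push_cast
      have := hcne i h
      field_simp
  set Q : Matrix (Fin d) (Fin d) ℂ := U * Uᴴ with hQdef
  have hUe : U * diagonal (fun i => if lam i = 0 then 0 else 1) = U := by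
    rw [hUdef, mul_assoc, diagonal_mul_diagonal]
    refine congrArg (W * ·) (congrArg diagonal (funext fun i => ?_))
    by_cases h : lam i = 0 <;> simp [hfdef, h]
  have hQidem : Q * Q = Q := by
    rw [hQdef, mul_assoc, ← mul_assoc Uᴴ, hUU, ← mul_assoc, hUe]
  have hQh : Qᴴ = Q := by
    rw [hQdef, conjTranspose_mul, conjTranspose_conjTranspose]
  have h1Q : (1 - Q).PosSemidef := by
    have h' : (1 - Q)ᴴ * (1 - Q) = 1 - Q := by
      rw [conjTranspose_sub, conjTranspose_one, hQh, sub_mul, one_mul, mul_sub, mul_one,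
        hQidem]
      abel
    have := posSemidef_conjTranspose_mul_self (1 - Q)
    rwa [h'] at this
  have hYYle : (Yᴴ * Y).trace.re ≤ 1 := by
    have e : Yᴴ * Y = Uᴴ * (ρ * U) := by
      simp only [hYdef, conjTranspose_mul, hBh, ← hBB, mul_assoc]
    have e2 : (Yᴴ * Y).trace = (ρ * Q).trace := by
      rw [e, trace_mul_comm, hQdef, mul_assoc]
    have h0 : 0 ≤ (ρ * (1 - Q)).trace.re := trace_mul_re_nonneg hρ h1Q
    have h1 : (ρ * (1 - Q)).trace = ρ.trace - (ρ * Q).trace := by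
      rw [mul_sub, mul_one, trace_sub]
    rw [h1, hρtr, Complex.sub_re, Complex.one_re] at h0
    rw [e2]
    linarith
  -- put it all together
  have hCS := re_trace_conjTranspose_mul_le Y X
  rw [keyeq, hXX] at hCS
  calc traceNorm A = ∑ i, c i := step1
    _ ≤ Real.sqrt ((Yᴴ * Y).trace.re) * Real.sqrt (A.trace.re) := hCS
    _ ≤ 1 * Real.sqrt (A.trace.re) :=
        mul_le_mul_of_nonneg_right (Real.sqrt_le_one.mpr hYYle) (Real.sqrt_nonneg _)
    _ = Real.sqrt (A.trace.re) := one_mul _
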